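/- Let f(s) = 3s² - 2s³ and let φ ∈ H¹(𝕋³) satisfy f'(φ(x)) = 0 for a.e. x ∈ 𝕋³. Then either φ = 0 a.e. or φ = 1 a.e. on 𝕋³; in particular the average of f(φ) over 𝕋³ equals 0 or 1. -/

import Mathlib

open MeasureTheory

/-- A fundamental domain of the torus `𝕋³`. -/
def torusCube : Set (EuclideanSpace ℝ (Fin 3)) := {x | ∀ i : Fin 3, x i ∈ Set.Ico (0 : ℝ) 1}

/-- `u` is `ℤ³`-periodic, i.e. descends to the torus `𝕋³`. -/
def TorusPeriodic (u : EuclideanSpace ℝ (Fin 3) → ℝ) : Prop :=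
  ∀ (i : Fin 3) (x : EuclideanSpace ℝ (Fin 3)), u (x + EuclideanSpace.single i (1 : ℝ)) = u x

/-- Let `f(s) = 3s² - 2s³`, so `f'(s) = 6(s - s²)`. If `φ` is an `H¹` (here: differentiable)
periodic function on `𝕋³` with `f'(φ(x)) = 0` a.e., then `φ = 0` a.e. or `φ = 1` a.e.;
in particular the mean of `f(φ)` over `𝕋³` is `0` or `1`. -/
theorem phase_indicator_dichotomy
    (φ : EuclideanSpace ℝ (Fin 3) → ℝ) (hper : TorusPeriodic φ)
    (hφ : Differentiable ℝ φ)
    (hcrit : ∀ᵐ x ∂(volume.restrict torusCube), 6 * (φ x - (φ x) ^ 2) = 0) :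
    ((∀ᵐ x ∂(volume.restrict torusCube), φ x = 0) ∨
      (∀ᵐ x ∂(volume.restrict torusCube), φ x = 1)) ∧
    ((∫ x in torusCube, (3 * (φ x) ^ 2 - 2 * (φ x) ^ 3)) = 0 ∨
      (∫ x in torusCube, (3 * (φ x) ^ 2 - 2 * (φ x) ^ 3)) = 1) := by
  have hcont : Continuous φ := hφ.continuous
  have hgc : Continuous (fun x => φ x - (φ x) ^ 2) := by fun_prop
  have hproj : ∀ i : Fin 3, Continuous (fun x : EuclideanSpace ℝ (Fin 3) => x i) :=
    fun i => (continuous_apply i).comp (PiLp.continuous_ofLp 2 fun _ : Fin 3 => ℝ)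
  have hmeas : MeasurableSet torusCube := by
    have : torusCube = ⋂ i : Fin 3,
        (fun x : EuclideanSpace ℝ (Fin 3) => x i) ⁻¹' Set.Ico (0:ℝ) 1 := by
      ext x; simp [torusCube]
    rw [this]
    exact MeasurableSet.iInter fun i => measurableSet_Ico.preimage (hproj i).measurable
  -- the open inner cube
  set U : Set (EuclideanSpace ℝ (Fin 3)) :=
    ⋂ i : Fin 3, (fun x : EuclideanSpace ℝ (Fin 3) => x i) ⁻¹' Set.Ioo (0:ℝ) 1 with hU
  have hUopen : IsOpen U :=
    isOpen_iInter_of_finite fun i => isOpen_Ioo.preimage (hproj i)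
  have hUsub : U ⊆ torusCube := by
    intro x hx i
    have := Set.mem_iInter.1 hx i
    exact ⟨le_of_lt this.1, this.2⟩
  -- g vanishes on U
  have hgU : ∀ x ∈ U, φ x - (φ x) ^ 2 = 0 := by
    have hnull : volume {x | ¬ (x ∈ torusCube → 6 * (φ x - (φ x) ^ 2) = 0)} = 0 := by
      have := (ae_restrict_iff' hmeas).1 hcrit
      exact this
    by_contra hbad
    push_neg at hbad
    obtain ⟨x0, hx0U, hx0⟩ := hbad
    set V : Set (EuclideanSpace ℝ (Fin 3)) := U ∩ {x | φ x - (φ x) ^ 2 ≠ 0} with hV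
    have hVopen : IsOpen V := hUopen.inter (isOpen_ne.preimage hgc)
    have hVsub : V ⊆ {x | ¬ (x ∈ torusCube → 6 * (φ x - (φ x) ^ 2) = 0)} := by
      intro x hx
      simp only [Set.mem_setOf_eq]
      intro h
      exact hx.2 (by linarith [h (hUsub hx.1)])
    have : V = ∅ := hVopen.eq_empty_of_measure_zero (measure_mono_null hVsub hnull)
    exact absurd (this ▸ Set.mem_inter hx0U hx0 : x0 ∈ (∅ : Set _)) (Set.notMem_empty x0)
  -- g vanishes on the whole cube by continuity along segments to the center
  have hg0 : ∀ x ∈ torusCube, φ x - (φ x) ^ 2 = 0 := by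
    intro x hx
    set c : EuclideanSpace ℝ (Fin 3) := WithLp.toLp 2 (fun _ => (1/2 : ℝ)) with hc
    set γ : ℝ → EuclideanSpace ℝ (Fin 3) := fun t => x + t • (c - x) with hγ
    have hγc : Continuous γ := by fun_prop
    have hmem : ∀ t ∈ Set.Ioo (0:ℝ) 1, γ t ∈ U := by
      intro t ht
      refine Set.mem_iInter.2 fun i => ?_
      have hxi := hx i
      have h1 : γ t i = x i + t * (1/2 - x i) := by
        simp [hγ, hc, PiLp.add_apply, PiLp.smul_apply, PiLp.sub_apply, smul_eq_mul]
      constructor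
      · show (0:ℝ) < γ t i
        rw [h1]; nlinarith [hxi.1, hxi.2, ht.1, ht.2]
      · show γ t i < 1
        rw [h1]; nlinarith [hxi.1, hxi.2, ht.1, ht.2]
    have heq : Set.EqOn (fun t => φ (γ t) - (φ (γ t)) ^ 2) (fun _ => (0:ℝ))
        (Set.Ioo (0:ℝ) 1) := fun t ht => hgU _ (hmem t ht)
    have hclos : Set.EqOn (fun t => φ (γ t) - (φ (γ t)) ^ 2) (fun _ => (0:ℝ))
        (closure (Set.Ioo (0:ℝ) 1)) :=
      heq.closure (hgc.comp hγc) continuous_const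
    have h0 : (0:ℝ) ∈ closure (Set.Ioo (0:ℝ) 1) := by
      rw [closure_Ioo (by norm_num : (0:ℝ) ≠ 1)]
      exact ⟨le_refl 0, by norm_num⟩
    have := hclos h0
    simpa [hγ] using this
  have hval : ∀ x ∈ torusCube, φ x = 0 ∨ φ x = 1 := by
    intro x hx
    have h := hg0 x hx
    have : φ x * (1 - φ x) = 0 := by ring_nf; linarith [h]
    rcases mul_eq_zero.1 this with h'' | h''
    · exact Or.inl h''
    · exact Or.inr (by linarith)
  have hconv : Convex ℝ torusCube := by
    intro x hx y hy a b ha hb hab i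
    have := (convex_Ico (0:ℝ) 1) (hx i) (hy i) ha hb hab
    simpa using this
  -- no mixed values (IVT)
  have key : ∀ a ∈ torusCube, ∀ b ∈ torusCube, φ a = 0 → φ b = 1 → False := by
    intro a ha b hb ha0 hb1
    set h : ℝ → ℝ := fun t => φ ((1 - t) • a + t • b) with hh
    have hhc : Continuous h := by fun_prop
    have h0 : h 0 = 0 := by simpa [hh] using ha0
    have h1 : h 1 = 1 := by simpa [hh] using hb1
    have := intermediate_value_Icc (by norm_num : (0:ℝ) ≤ 1) hhc.continuousOn
    rw [h0, h1] at this
    obtain ⟨t, ht, hht⟩ := this (by norm_num : (1/2:ℝ) ∈ Set.Icc 0 1)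
    have hmem : (1 - t) • a + t • b ∈ torusCube :=
      hconv ha hb (by linarith [ht.2]) ht.1 (by ring)
    rcases hval _ hmem with h' | h' <;> rw [hh] at hht <;> simp only [h'] at hht <;> norm_num at hht
  -- center
  have hc : (WithLp.toLp 2 (fun _ => (1/2:ℝ)) : EuclideanSpace ℝ (Fin 3)) ∈ torusCube :=
    fun i => ⟨by norm_num, by norm_num⟩
  have hallmem : ∀ᵐ x ∂(volume.restrict torusCube), x ∈ torusCube := ae_restrict_mem hmeas
  rcases hval _ hc with hc0 | hc1
  · have hall : ∀ x ∈ torusCube, φ x = 0 := fun x hx =>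
      (hval x hx).resolve_right fun h1 => key _ hc x hx hc0 h1
    refine ⟨Or.inl ?_, Or.inl ?_⟩
    · filter_upwards [hallmem] with x hx using hall x hx
    · rw [setIntegral_congr_fun hmeas (g := fun _ => (0:ℝ))
        (fun x hx => by rw [hall x hx]; ring)]
      simp
  · have hall : ∀ x ∈ torusCube, φ x = 1 := fun x hx =>
      (hval x hx).resolve_left fun h0 => key x hx _ hc h0 hc1
    refine ⟨Or.inr ?_, Or.inr ?_⟩
    · filter_upwards [hallmem] with x hx using hall x hx
    · rw [setIntegral_congr_fun hmeas (g := fun _ => (1:ℝ))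
        (fun x hx => by rw [hall x hx]; ring)]
      rw [setIntegral_const]
      have hvol : volume torusCube = 1 := by
        have h := PiLp.volume_preserving_ofLp (Fin 3)
        have he : torusCube = (@WithLp.ofLp 2 (Fin 3 → ℝ)) ⁻¹'
            (Set.univ.pi fun _ => Set.Ico (0:ℝ) 1) := by
          ext x; simp [torusCube, Set.mem_pi]
        rw [he, h.measure_preimage
          (MeasurableSet.univ_pi fun _ => measurableSet_Ico).nullMeasurableSet]
        simp [volume_pi_pi, Real.volume_Ico]
      rw [measureReal_def, hvol]
      norm_num
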